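/- For every integer M ≥ 1, let Q be the (M+2)×(M+2) real matrix with rows and columns indexed by 0,…,M+1, whose nonzero entries are Q_{0,0} = Q_{0,1} = 1/2, Q_{M+1,M} = Q_{M+1,M+1} = 1/2, and Q_{i,i−1} = Q_{i,i+1} = 1/8, Q_{i,i} = 3/4 for 1 ≤ i ≤ M. Then, with S = diag(2,1,…,1,2), the matrix A = S⁻¹ Q S is symmetric positive definite, and there exists a real (M+2)×(M+2) matrix Z with Z² = Q. -/

import Mathlib

/-- The matrix representation `Q` of the quadratic-spline collocation averaging operator
`θ_x`: `Q_{0,0} = Q_{0,1} = 1/2`, `Q_{M+1,M} = Q_{M+1,M+1} = 1/2`, and, for `1 ≤ i ≤ M`,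
`Q_{i,i-1} = Q_{i,i+1} = 1/8`, `Q_{i,i} = 3/4`; all other entries vanish. -/
noncomputable def Qmat (M : ℕ) : Matrix (Fin (M + 2)) (Fin (M + 2)) ℝ := fun i j =>
  if i.val = 0 then (if j.val = 0 ∨ j.val = 1 then 1 / 2 else 0)
  else if i.val = M + 1 then (if j.val = M ∨ j.val = M + 1 then 1 / 2 else 0)
  else if j.val + 1 = i.val ∨ j.val = i.val + 1 then 1 / 8
  else if j = i then 3 / 4
  else 0

/-- The diagonal matrix `S = diag(2, 1, …, 1, 2)` of size `M + 2`. -/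
noncomputable def Smat (M : ℕ) : Matrix (Fin (M + 2)) (Fin (M + 2)) ℝ :=
  Matrix.diagonal (fun i => if i.val = 0 ∨ i.val = M + 1 then 2 else 1)

open Matrix Finset


lemma sdd_posDef {n : ℕ} (A : Matrix (Fin n) (Fin n) ℝ) (hsym : A.IsSymm)
    (h : ∀ i, ∑ j ∈ Finset.univ.erase i, |A i j| < A i i) : A.PosDef := by
  have hsym' : ∀ i j, A j i = A i j := fun i j => by
    conv_rhs => rw [← hsym]
    rfl
  have hherm : A.IsHermitian := by
    ext i j
    simp [hsym' i j]
  refine posDef_iff_dotProduct_mulVec.mpr ⟨hherm, fun x hx => ?_⟩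
  obtain ⟨k, hk⟩ : ∃ k, x k ≠ 0 := by
    by_contra hc; push_neg at hc; exact hx (funext hc)
  have star_x : star x = x := by simp
  rw [star_x]
  have expand : dotProduct x (A *ᵥ x) =
      ∑ i, A i i * x i ^ 2 + ∑ i, ∑ j ∈ univ.erase i, A i j * x i * x j := by
    rw [← Finset.sum_add_distrib]
    simp only [dotProduct, mulVec, dotProduct]
    refine Finset.sum_congr rfl fun i _ => ?_
    rw [← Finset.add_sum_erase _ (fun j => A i j * x j) (Finset.mem_univ i), mul_add,
      Finset.mul_sum]
    congr 1
    · ring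
    · exact Finset.sum_congr rfl fun j _ => by ring
  have key : ∀ i j, -(|A i j| * (x i ^ 2 + x j ^ 2) / 2) ≤ A i j * x i * x j := by
    intro i j
    have h1 : -|A i j * x i * x j| ≤ A i j * x i * x j := neg_abs_le _
    have h2 : |A i j * x i * x j| ≤ |A i j| * (x i ^ 2 + x j ^ 2) / 2 := by
      rw [abs_mul, abs_mul]
      nlinarith [sq_abs (x i), sq_abs (x j), abs_nonneg (A i j), abs_nonneg (x i),
        abs_nonneg (x j), sq_nonneg (|x i| - |x j|)]
    linarith
  have swap : ∑ i, ∑ j ∈ univ.erase i, |A i j| * x j ^ 2 / 2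
      = ∑ i, ∑ j ∈ univ.erase i, |A i j| * x i ^ 2 / 2 := by
    rw [Finset.sum_comm' (s' := fun j => univ.erase j) (t' := univ)
      (fun i j => by simp [eq_comm, and_comm])]
    refine Finset.sum_congr rfl fun i _ => Finset.sum_congr rfl fun j _ => ?_
    rw [abs_eq_abs.2 (Or.inl (hsym' j i))]
  have step2 : ∑ i, ∑ j ∈ univ.erase i, (|A i j| * (x i ^ 2 + x j ^ 2) / 2)
      = ∑ i, (∑ j ∈ univ.erase i, |A i j|) * x i ^ 2 := by
    have e1 : ∀ i : Fin n, ∑ j ∈ univ.erase i, (|A i j| * (x i ^ 2 + x j ^ 2) / 2)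
        = (∑ j ∈ univ.erase i, |A i j| * x i ^ 2 / 2)
          + ∑ j ∈ univ.erase i, |A i j| * x j ^ 2 / 2 := fun i => by
      rw [← Finset.sum_add_distrib]
      exact Finset.sum_congr rfl fun j _ => by ring
    simp_rw [e1]
    rw [Finset.sum_add_distrib, swap, ← Finset.sum_add_distrib]
    refine Finset.sum_congr rfl fun i _ => ?_
    rw [← Finset.sum_add_distrib, Finset.sum_mul]
    exact Finset.sum_congr rfl fun j _ => by ring
  have step1 : ∑ i, ∑ j ∈ univ.erase i, A i j * x i * x j
      ≥ -∑ i, (∑ j ∈ univ.erase i, |A i j|) * x i ^ 2 := by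
    rw [← step2]
    calc -∑ i, ∑ j ∈ univ.erase i, (|A i j| * (x i ^ 2 + x j ^ 2) / 2)
        = ∑ i, ∑ j ∈ univ.erase i, -(|A i j| * (x i ^ 2 + x j ^ 2) / 2) := by
          simp [Finset.sum_neg_distrib]
      _ ≤ ∑ i, ∑ j ∈ univ.erase i, A i j * x i * x j :=
          Finset.sum_le_sum fun i _ => Finset.sum_le_sum fun j _ => key i j
  have final : 0 < ∑ i, (A i i - ∑ j ∈ univ.erase i, |A i j|) * x i ^ 2 := by
    refine Finset.sum_pos' (fun i _ => ?_) ⟨k, Finset.mem_univ k, ?_⟩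
    · have := h i
      exact mul_nonneg (by linarith) (sq_nonneg _)
    · have h1 := h k
      have h2 : 0 < x k ^ 2 := by positivity
      nlinarith
  rw [expand]
  have : ∑ i, (A i i - ∑ j ∈ univ.erase i, |A i j|) * x i ^ 2
      = ∑ i, A i i * x i ^ 2 - ∑ i, (∑ j ∈ univ.erase i, |A i j|) * x i ^ 2 := by
    rw [← Finset.sum_sub_distrib]
    exact Finset.sum_congr rfl fun i _ => by ring
  rw [this] at final
  linarith

noncomputable def dvec (M : ℕ) : Fin (M + 2) → ℝ :=
  fun i => if i.val = 0 ∨ i.val = M + 1 then 2 else 1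

lemma hSmul (M : ℕ) : Smat M * Matrix.diagonal (fun i => (dvec M i)⁻¹) = 1 := by
  rw [Smat, Matrix.diagonal_mul_diagonal]
  rw [show (fun i => (if (i : Fin (M+2)).val = 0 ∨ i.val = M + 1 then (2:ℝ) else 1) * (dvec M i)⁻¹)
      = fun _ => 1 from funext fun i => by
    unfold dvec; split_ifs <;> norm_num]
  exact Matrix.diagonal_one

lemma hSmul' (M : ℕ) : Matrix.diagonal (fun i => (dvec M i)⁻¹) * Smat M = 1 := by
  rw [Smat, Matrix.diagonal_mul_diagonal]
  rw [show (fun i => (dvec M i)⁻¹ * (if (i : Fin (M+2)).val = 0 ∨ i.val = M + 1 then (2:ℝ) else 1))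
      = fun _ => 1 from funext fun i => by
    unfold dvec; split_ifs <;> norm_num]
  exact Matrix.diagonal_one

lemma Sinv (M : ℕ) : (Smat M)⁻¹ = Matrix.diagonal (fun i => (dvec M i)⁻¹) :=
  Matrix.inv_eq_right_inv (hSmul M)

lemma Aentry (M : ℕ) (i j : Fin (M + 2)) :
    ((Smat M)⁻¹ * Qmat M * Smat M) i j = (dvec M i)⁻¹ * Qmat M i j * dvec M j := by
  rw [Sinv, Smat, Matrix.mul_diagonal, Matrix.diagonal_mul]
  rfl

set_option maxHeartbeats 2000000 in
lemma Asymm (M : ℕ) (hM : 1 ≤ M) : ((Smat M)⁻¹ * Qmat M * Smat M).IsSymm := by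
  ext i j
  rw [Matrix.transpose_apply, Aentry, Aentry]
  obtain ⟨iv, hi⟩ := i
  obtain ⟨jv, hj⟩ := j
  unfold Qmat dvec
  simp only [Fin.mk.injEq]
  split_ifs <;> first | omega | norm_num

lemma sum_indicator_le {n : ℕ} (s : Finset (Fin n)) (f : Fin n → ℝ) (c : Fin n) (a : ℝ)
    (ha : 0 ≤ a) (hf : ∀ j ∈ s, f j ≤ if j = c then a else 0) : ∑ j ∈ s, f j ≤ a := by
  calc ∑ j ∈ s, f j ≤ ∑ j ∈ s, (if j = c then a else 0) := Finset.sum_le_sum hf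
    _ ≤ ∑ j : Fin n, (if j = c then a else 0) :=
        Finset.sum_le_sum_of_subset_of_nonneg (Finset.subset_univ s)
          (fun j _ _ => by split <;> simp [ha])
    _ = a := by simp

lemma sum_indicator2_le {n : ℕ} (s : Finset (Fin n)) (f : Fin n → ℝ) (c₁ c₂ : Fin n) (a : ℝ)
    (ha : 0 ≤ a)
    (hf : ∀ j ∈ s, f j ≤ (if j = c₁ then a else 0) + (if j = c₂ then a else 0)) :
    ∑ j ∈ s, f j ≤ a + a := by
  calc ∑ j ∈ s, f j
      ≤ ∑ j ∈ s, ((if j = c₁ then a else 0) + (if j = c₂ then a else 0)) :=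
        Finset.sum_le_sum hf
    _ ≤ ∑ j : Fin n, ((if j = c₁ then a else 0) + (if j = c₂ then a else 0)) :=
        Finset.sum_le_sum_of_subset_of_nonneg (Finset.subset_univ s)
          (fun j _ _ => by split <;> split <;> simp [ha] <;> linarith)
    _ = a + a := by rw [Finset.sum_add_distrib]; simp

set_option maxHeartbeats 2000000 in
lemma Asdd (M : ℕ) (hM : 1 ≤ M) (i : Fin (M + 2)) :
    ∑ j ∈ Finset.univ.erase i, |((Smat M)⁻¹ * Qmat M * Smat M) i j|
      < ((Smat M)⁻¹ * Qmat M * Smat M) i i := by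
  obtain ⟨iv, hiv⟩ := i
  by_cases hi0 : iv = 0
  · subst hi0
    have hdiag : ((Smat M)⁻¹ * Qmat M * Smat M) ⟨0, hiv⟩ ⟨0, hiv⟩ = 1 / 2 := by
      rw [Aentry]; unfold Qmat dvec
      split_ifs <;> (try simp_all) <;> first | omega | norm_num [abs_le]
    have hsum : ∑ j ∈ Finset.univ.erase ⟨0, hiv⟩,
        |((Smat M)⁻¹ * Qmat M * Smat M) ⟨0, hiv⟩ j| ≤ 1 / 4 := by
      refine sum_indicator_le _ _ ⟨1, by omega⟩ (1 / 4) (by norm_num) ?_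
      intro j hj
      have hji : j.val ≠ 0 := by
        have := Finset.ne_of_mem_erase hj
        exact fun h => this (Fin.ext h)
      rw [Aentry]
      obtain ⟨jv, hjv⟩ := j
      simp only [Fin.mk.injEq] at hji ⊢
      unfold Qmat dvec
      split_ifs <;> (try simp_all) <;> first | omega | norm_num [abs_le]
    rw [hdiag]; linarith
  · by_cases hiM : iv = M + 1
    · subst hiM
      have hdiag : ((Smat M)⁻¹ * Qmat M * Smat M) ⟨M + 1, hiv⟩ ⟨M + 1, hiv⟩ = 1 / 2 := by
        rw [Aentry]; unfold Qmat dvec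
        split_ifs <;> (try simp_all) <;> first | omega | norm_num [abs_le]
      have hsum : ∑ j ∈ Finset.univ.erase ⟨M + 1, hiv⟩,
          |((Smat M)⁻¹ * Qmat M * Smat M) ⟨M + 1, hiv⟩ j| ≤ 1 / 4 := by
        refine sum_indicator_le _ _ ⟨M, by omega⟩ (1 / 4) (by norm_num) ?_
        intro j hj
        have hji : j.val ≠ M + 1 := by
          have := Finset.ne_of_mem_erase hj
          simpa [Fin.ext_iff] using this
        rw [Aentry]
        obtain ⟨jv, hjv⟩ := j
        simp only [Fin.mk.injEq] at hji ⊢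
        unfold Qmat dvec
        split_ifs <;> (try simp_all) <;> first | omega | norm_num [abs_le]
      rw [hdiag]; linarith
    · have hdiag : ((Smat M)⁻¹ * Qmat M * Smat M) ⟨iv, hiv⟩ ⟨iv, hiv⟩ = 3 / 4 := by
        rw [Aentry]; unfold Qmat dvec
        split_ifs <;> (try simp_all) <;> first | omega | norm_num [abs_le]
      have hsum : ∑ j ∈ Finset.univ.erase ⟨iv, hiv⟩,
          |((Smat M)⁻¹ * Qmat M * Smat M) ⟨iv, hiv⟩ j| ≤ 1 / 4 + 1 / 4 := by
        refine sum_indicator2_le _ _ ⟨iv - 1, by omega⟩ ⟨iv + 1, by omega⟩ (1 / 4)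
          (by norm_num) ?_
        intro j hj
        have hji : j.val ≠ iv := by
          have := Finset.ne_of_mem_erase hj
          simpa [Fin.ext_iff] using this
        rw [Aentry]
        obtain ⟨jv, hjv⟩ := j
        simp only [Fin.mk.injEq] at hji ⊢
        unfold Qmat dvec
        split_ifs <;> (try simp_all) <;> first | omega | norm_num [abs_le]
      rw [hdiag]; linarith


theorem stmt6 (M : ℕ) (hM : 1 ≤ M) :
    ((Smat M)⁻¹ * Qmat M * Smat M).IsSymm ∧
    ((Smat M)⁻¹ * Qmat M * Smat M).PosDef ∧
    ∃ Z : Matrix (Fin (M + 2)) (Fin (M + 2)) ℝ, Z * Z = Qmat M := by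
  have hsym := Asymm M hM
  have hpd : ((Smat M)⁻¹ * Qmat M * Smat M).PosDef :=
    sdd_posDef _ hsym (Asdd M hM)
  refine ⟨hsym, hpd, ?_⟩
  have hps := hpd.posSemidef
  obtain ⟨W, hWW⟩ : ∃ W : Matrix (Fin (M + 2)) (Fin (M + 2)) ℝ,
      W * W = (Smat M)⁻¹ * Qmat M * Smat M := by
    open scoped MatrixOrder in exact ⟨_, CFC.sqrt_mul_sqrt_self _ hps.nonneg⟩
  have h1 : Smat M * (Smat M)⁻¹ = 1 := by rw [Sinv]; exact hSmul M
  have h2 : (Smat M)⁻¹ * Smat M = 1 := by rw [Sinv]; exact hSmul' M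
  have cancel1 : ∀ X : Matrix (Fin (M + 2)) (Fin (M + 2)) ℝ,
      (Smat M)⁻¹ * (Smat M * X) = X := fun X => by
    rw [← Matrix.mul_assoc, h2, Matrix.one_mul]
  refine ⟨Smat M * W * (Smat M)⁻¹, ?_⟩
  have expand : Smat M * W * (Smat M)⁻¹ * (Smat M * W * (Smat M)⁻¹)
      = Smat M * (W * ((Smat M)⁻¹ * (Smat M * (W * (Smat M)⁻¹)))) := by
    simp only [Matrix.mul_assoc]
  rw [expand, cancel1 (W * (Smat M)⁻¹), ← Matrix.mul_assoc W W, hWW]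
  have expand2 : Smat M * ((Smat M)⁻¹ * Qmat M * Smat M * (Smat M)⁻¹)
      = Smat M * ((Smat M)⁻¹ * (Qmat M * (Smat M * (Smat M)⁻¹))) := by
    simp only [Matrix.mul_assoc]
  rw [expand2, h1, Matrix.mul_one, ← Matrix.mul_assoc, h1, Matrix.one_mul]
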